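/- arXiv:1305.3961 — 3 statements merged into one kernel-verified Lean document; each statement's English description precedes it below -/
import Mathlib

section
/- Let M ≥ 1 be an integer. Then the image of the set S_M of scattering sequences under the transit count map κ is exactly the set 𝔏_M; that is, κ(p) ∈ 𝔏_M for every p ∈ S_M, and for every k ∈ 𝔏_M there exists a scattering sequence p ∈ S_M with κ(p) = k. -/
/-- Entry `i` of an integer sequence given as a list (default `0` out of range). -/
def ent (p : List ℤ) (i : ℕ) : ℤ := p.getD i 0

/-- Excursions of `p` to depth `n`: maximal blocks `[a, c]` of consecutive
indices on which `p` is at least `n`. -/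
def excSet (p : List ℤ) (n : ℤ) : Set (ℕ × ℕ) :=
  {ac | ac.1 ≤ ac.2 ∧ ac.2 ≤ p.length - 1 ∧
    (∀ i, ac.1 ≤ i → i ≤ ac.2 → n ≤ ent p i) ∧
    (ac.1 = 0 ∨ ent p (ac.1 - 1) < n) ∧
    (ac.2 = p.length - 1 ∨ ent p (ac.2 + 1) < n)}

/-- The left shift `(k_1, ..., k_M, 0)` of a vector `(k_0, ..., k_M)`. -/
def ktilde (M : ℕ) (k : Fin (M + 1) → ℕ) : Fin (M + 1) → ℕ :=
  fun n => if h : (n : ℕ) + 1 < M + 1 then k ⟨(n : ℕ) + 1, h⟩ else 0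

/-- A reflection scattering sequence for an `M`-layer medium: a sequence
`(p_0, ..., p_L)` with `L ≥ 2`, `p_0 = p_L = -1`, `p_i ∈ {0, ..., M}` for
`1 ≤ i ≤ L - 1`, and `|p_{i+1} - p_i| = 1` for all `0 ≤ i ≤ L - 1`. -/
def IsScat (M : ℕ) (p : List ℤ) : Prop :=
  3 ≤ p.length ∧ ent p 0 = -1 ∧ ent p (p.length - 1) = -1 ∧
  (∀ i, 1 ≤ i → i ≤ p.length - 2 → 0 ≤ ent p i ∧ ent p i ≤ (M : ℤ)) ∧
  (∀ i, i < p.length - 1 → |ent p (i + 1) - ent p i| = 1)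

/-- The transit count vector `κ(p)`: `k_n` is the number of excursions of `p`
to depth `n`. -/
noncomputable def kappa (M : ℕ) (p : List ℤ) : Fin (M + 1) → ℕ :=
  fun n => (excSet p ((n : ℕ) : ℤ)).ncard

/-- The branch count vector `β(p)`: `b_n` is the number of excursions of `p`
to depth `n` that contain some index `i` with `p_i ≥ n + 1`. -/
noncomputable def beta (M : ℕ) (p : List ℤ) : Fin (M + 1) → ℕ :=
  fun n => {ac ∈ excSet p ((n : ℕ) : ℤ) |
    ∃ i, ac.1 ≤ i ∧ i ≤ ac.2 ∧ ((n : ℕ) : ℤ) + 1 ≤ ent p i}.ncard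

/-! ### Auxiliary development -/

/-- Number of upcrossings of level `m` in a list. -/
def crossCount (m : ℤ) : List ℤ → ℕ
  | [] => 0
  | [_] => 0
  | x :: y :: t => (if x < m ∧ m ≤ y then 1 else 0) + crossCount m (y :: t)

/-- The set of left endpoints of excursions to depth `m`. -/
def startFin (m : ℤ) (p : List ℤ) : Finset ℕ :=
  (Finset.range p.length).filter fun a => 0 < a ∧ ent p (a - 1) < m ∧ m ≤ ent p a

@[simp] lemma ent_cons_succ (x : ℤ) (q : List ℤ) (i : ℕ) : ent (x :: q) (i + 1) = ent q i := rfl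
@[simp] lemma ent_cons_zero (x : ℤ) (q : List ℤ) : ent (x :: q) 0 = x := rfl

lemma startFin_card (m : ℤ) : ∀ p : List ℤ, (startFin m p).card = crossCount m p
  | [] => by simp [startFin, crossCount]
  | [x] => by
    simp only [crossCount, startFin, List.length_singleton, Finset.range_one]
    rw [Finset.filter_singleton]
    simp
  | x :: y :: t => by
    have ih := startFin_card m (y :: t)
    have hset : startFin m (x :: y :: t)
        = (if x < m ∧ m ≤ y then ({1} : Finset ℕ) else ∅) ∪
          (startFin m (y :: t)).image (· + 1) := by
      ext a
      simp only [startFin, Finset.mem_filter, Finset.mem_range, Finset.mem_union,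
        Finset.mem_image]
      constructor
      · rintro ⟨hlen, hpos, hprev, hcur⟩
        obtain ⟨b, rfl⟩ : ∃ b, a = b + 1 := ⟨a - 1, by omega⟩
        rcases Nat.eq_zero_or_pos b with rfl | hb
        · left
          simp only [ent_cons_succ, ent_cons_zero] at hprev hcur
          simp_all
        · right
          obtain ⟨c, rfl⟩ : ∃ c, b = c + 1 := ⟨b - 1, by omega⟩
          refine ⟨c + 1, ⟨⟨?_, ?_, ?_, ?_⟩, rfl⟩⟩
          · simpa using hlen
          · omega
          · simpa using hprev
          · simpa using hcur
      · rintro (h | ⟨b, ⟨hblen, hbpos, hbprev, hbcur⟩, rfl⟩)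
        · split_ifs at h with hc
          · simp only [Finset.mem_singleton] at h
            subst h
            refine ⟨by simp, by omega, by simpa using hc.1, by simpa using hc.2⟩
          · simp at h
        · obtain ⟨c, rfl⟩ : ∃ c, b = c + 1 := ⟨b - 1, by omega⟩
          refine ⟨by simpa using hblen, by omega, by simpa using hbprev, by simpa using hbcur⟩
    rw [hset, Finset.card_union_of_disjoint, Finset.card_image_of_injective _
      (add_left_injective 1)]
    · rw [ih]
      split_ifs with hc <;> simp [crossCount, hc]
    · intro s hs hs'
      intro a ha
      have h1 := hs ha
      have h2 := hs' ha
      split_ifs at h1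
      · simp only [Finset.mem_singleton] at h1
        subst h1
        simp only [Finset.mem_image] at h2
        obtain ⟨b, hb, hb1⟩ := h2
        simp only [startFin, Finset.mem_filter] at hb
        omega
      · simp at h1

lemma excSet_ncard (p : List ℤ) (m : ℤ) (hlen : 1 ≤ p.length)
    (h0 : ent p 0 < m) (hlast : ent p (p.length - 1) < m) :
    (excSet p m).ncard = (startFin m p).card := by
  have hinj : Set.InjOn Prod.fst (excSet p m) := by
    rintro ⟨a, c⟩ hac ⟨a', c'⟩ hac' (h : a = a')
    subst h
    obtain ⟨h1, h2, h3, h4, h5⟩ := hac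
    obtain ⟨h1', h2', h3', h4', h5'⟩ := hac'
    dsimp only at h1 h2 h3 h4 h5 h1' h2' h3' h4' h5'
    simp only [Prod.mk.injEq, true_and]
    by_contra hne
    rcases Nat.lt_or_ge c c' with hlt | hge
    · rcases h5 with h5 | h5
      · omega
      · have := h3' (c + 1) (by omega) (by omega)
        omega
    · have hlt : c' < c := by omega
      rcases h5' with h5' | h5'
      · omega
      · have := h3 (c' + 1) (by omega) (by omega)
        omega
  have himg : Prod.fst '' excSet p m = ↑(startFin m p) := by
    ext a
    simp only [Set.mem_image, Finset.coe_filter, Set.mem_setOf_eq, startFin, Finset.mem_range]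
    constructor
    · rintro ⟨⟨a', c⟩, ⟨h1, h2, h3, h4, h5⟩, rfl⟩
      have hne0 : a' ≠ 0 := by
        rintro rfl
        have := h3 0 le_rfl (by omega)
        omega
      refine ⟨by omega, by omega, h4.resolve_left hne0, h3 a' le_rfl h1⟩
    · rintro ⟨halen, hapos, haprev, hacur⟩
      have hex : ∃ d, ent p (a + d) < m := by
        refine ⟨p.length - 1 - a, ?_⟩
        have heq : a + (p.length - 1 - a) = p.length - 1 := by omega
        rw [heq]; exact hlast
      classical
      have hd : ent p (a + Nat.find hex) < m := Nat.find_spec hex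
      have hdpos : 0 < Nat.find hex := by
        rcases Nat.eq_zero_or_pos (Nat.find hex) with h | h
        · rw [h, Nat.add_zero] at hd; omega
        · exact h
      have hdle : Nat.find hex ≤ p.length - 1 - a := by
        apply Nat.find_min' hex
        have heq : a + (p.length - 1 - a) = p.length - 1 := by omega
        rw [heq]; exact hlast
      refine ⟨(a, a + Nat.find hex - 1), ⟨by omega, by omega, ?_, Or.inr haprev, Or.inr ?_⟩, rfl⟩
      · intro i hai hic
        have hlt : i - a < Nat.find hex := by omega
        have := Nat.find_min hex hlt
        have heq : a + (i - a) = i := by omega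
        rw [heq] at this
        omega
      · have heq : a + Nat.find hex - 1 + 1 = a + Nat.find hex := by omega
        rw [heq]; exact hd
  calc (excSet p m).ncard = (Prod.fst '' excSet p m).ncard :=
        (Set.ncard_image_of_injOn hinj).symm
    _ = (startFin m p).card := by rw [himg]; exact Set.ncard_coe_finset _

lemma startFin_nonempty_of_le (p : List ℤ) (m m' : ℤ) (hmm : m ≤ m') (h0 : ent p 0 < m)
    (h : (startFin m' p).Nonempty) : (startFin m p).Nonempty := by
  obtain ⟨a, ha⟩ := h
  simp only [startFin, Finset.mem_filter, Finset.mem_range] at ha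
  obtain ⟨halen, hapos, haprev, hacur⟩ := ha
  have hPa : ¬ (ent p a < m) := by omega
  have hj : ent p (Nat.findGreatest (fun j => ent p j < m) a) < m := by
    have := Nat.findGreatest_spec (P := fun j => ent p j < m) (Nat.zero_le a) h0
    simpa using this
  have hja : Nat.findGreatest (fun j => ent p j < m) a < a :=
    lt_of_le_of_ne (Nat.findGreatest_le a) (fun h => hPa (h ▸ hj))
  refine ⟨Nat.findGreatest (fun j => ent p j < m) a + 1, ?_⟩
  simp only [startFin, Finset.mem_filter, Finset.mem_range]
  refine ⟨by omega, by omega, by simpa using hj, ?_⟩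
  by_contra hc
  push_neg at hc
  have := Nat.le_findGreatest (P := fun j => ent p j < m)
    (show Nat.findGreatest (fun j => ent p j < m) a + 1 ≤ a by omega) hc
  omega

/-! ### The explicit construction -/

/-- `c` spikes up to level `n + 1`, starting and ending at `n`. -/
def updown (n : ℤ) : ℕ → List ℤ
  | 0 => [n]
  | c + 1 => n :: (n + 1) :: updown n c

/-- The canonical segment at level `n` spanning levels `n, ..., n + d`. -/
def full (k : ℕ → ℕ) : ℕ → ℕ → List ℤ
  | n, 0 => [(n : ℤ)]
  | n, d + 1 => updown (n : ℤ) (k (n + 1) - 1) ++ (full k (n + 1) d ++ [(n : ℤ)])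

lemma updown_cons (n : ℤ) : ∀ c, ∃ t, updown n c = n :: t
  | 0 => ⟨[], rfl⟩
  | c + 1 => ⟨(n + 1) :: updown n c, rfl⟩

lemma updown_concat (n : ℤ) : ∀ c, ∃ t, updown n c = t ++ [n]
  | 0 => ⟨[], rfl⟩
  | c + 1 => by
    obtain ⟨t, ht⟩ := updown_concat n c
    exact ⟨n :: (n + 1) :: t, by simp [updown, ht]⟩

lemma updown_mem (n : ℤ) : ∀ c, ∀ x ∈ updown n c, x = n ∨ x = n + 1
  | 0, x, hx => by simp [updown] at hx; exact Or.inl hx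
  | c + 1, x, hx => by
    simp only [updown, List.mem_cons] at hx
    rcases hx with rfl | rfl | hx
    · exact Or.inl rfl
    · exact Or.inr rfl
    · exact updown_mem n c x hx

lemma updown_chain (n : ℤ) : ∀ c, List.Chain' (fun a b => |b - a| = 1) (updown n c)
  | 0 => List.isChain_singleton n
  | c + 1 => by
    obtain ⟨t, ht⟩ := updown_cons n c
    unfold List.Chain'
    rw [updown, List.isChain_cons_cons, ht, List.isChain_cons_cons, ← ht]
    exact ⟨by simp, by simp, updown_chain n c⟩

lemma crossCount_cons_cons (m x y : ℤ) (t : List ℤ) :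
    crossCount m (x :: y :: t) = (if x < m ∧ m ≤ y then 1 else 0) + crossCount m (y :: t) := rfl

lemma crossCount_snoc_append (m : ℤ) (x y : ℤ) (t₂ : List ℤ) :
    ∀ t₁ : List ℤ, crossCount m ((t₁ ++ [x]) ++ y :: t₂)
      = crossCount m (t₁ ++ [x]) + (if x < m ∧ m ≤ y then 1 else 0) + crossCount m (y :: t₂)
  | [] => by simp [crossCount]
  | [a] => by
    simp only [List.cons_append, List.nil_append, crossCount]
    omega
  | a :: b :: t => by
    have ih := crossCount_snoc_append m x y t₂ (b :: t)
    simp only [List.cons_append] at ih ⊢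
    rw [crossCount_cons_cons, crossCount_cons_cons m a b, ih]
    omega

lemma crossCount_updown (m n : ℤ) :
    ∀ c, crossCount m (updown n c) = if n < m ∧ m ≤ n + 1 then c else 0
  | 0 => by simp [updown, crossCount]
  | c + 1 => by
    have ih := crossCount_updown m n c
    obtain ⟨t, ht⟩ := updown_cons n c
    rw [updown, crossCount_cons_cons, ht, crossCount_cons_cons, ← ht, ih]
    split_ifs <;> omega

lemma full_cons (k : ℕ → ℕ) : ∀ d n, ∃ t, full k n d = (n : ℤ) :: t
  | 0, n => ⟨[], rfl⟩
  | d + 1, n => by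
    obtain ⟨t, ht⟩ := updown_cons (n : ℤ) (k (n + 1) - 1)
    exact ⟨t ++ (full k (n + 1) d ++ [(n : ℤ)]), by simp [full, ht]⟩

lemma full_concat (k : ℕ → ℕ) : ∀ d n, ∃ t, full k n d = t ++ [(n : ℤ)]
  | 0, n => ⟨[], rfl⟩
  | d + 1, n => ⟨updown (n : ℤ) (k (n + 1) - 1) ++ full k (n + 1) d, by simp [full]⟩

lemma full_mem (k : ℕ → ℕ) : ∀ d n, ∀ x ∈ full k n d, (n : ℤ) ≤ x ∧ x ≤ (n : ℤ) + (d : ℤ)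
  | 0, n, x, hx => by simp [full] at hx; omega
  | d + 1, n, x, hx => by
    simp only [full, List.mem_append, List.mem_cons, List.not_mem_nil, or_false] at hx
    rcases hx with hx | hx | hx
    · rcases updown_mem _ _ _ hx with h | h <;> push_cast <;> omega
    · have := full_mem k d (n + 1) x hx
      push_cast at this ⊢
      omega
    · push_cast; omega

lemma full_chain (k : ℕ → ℕ) : ∀ d n, List.Chain' (fun a b : ℤ => |b - a| = 1) (full k n d)
  | 0, n => List.isChain_singleton _
  | d + 1, n => by
    obtain ⟨t, ht⟩ := updown_concat (n : ℤ) (k (n + 1) - 1)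
    obtain ⟨t', ht'⟩ := full_cons k d (n + 1)
    obtain ⟨t'', ht''⟩ := full_concat k d (n + 1)
    rw [full]
    apply List.IsChain.append
    · exact updown_chain _ _
    · apply List.IsChain.append
      · exact full_chain k d (n + 1)
      · exact List.isChain_singleton _
      · intro a ha b hb
        rw [ht'', List.getLast?_concat] at ha
        simp only [List.head?_cons, Option.mem_some_iff] at ha hb
        subst ha; subst hb
        push_cast
        simp [abs_sub_comm]
    · intro a ha b hb
      rw [ht, List.getLast?_concat] at ha
      rw [ht', List.cons_append, List.head?_cons] at hb
      simp only [Option.mem_some_iff] at ha hb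
      subst ha; subst hb
      push_cast
      simp

lemma crossCount_full (k : ℕ → ℕ) :
    ∀ d n, (∀ j, n < j → j ≤ n + d → 1 ≤ k j) → ∀ mm : ℕ,
      crossCount (mm : ℤ) (full k n d) = if n < mm ∧ mm ≤ n + d then k mm else 0
  | 0, n, _, mm => by
    simp only [full, crossCount]
    have : ¬ (n < mm ∧ mm ≤ n + 0) := by omega
    rw [if_neg this]
  | d + 1, n, h, mm => by
    have ih := crossCount_full k d (n + 1) (fun j h1 h2 => h j (by omega) (by omega)) mm
    have hk1 : 1 ≤ k (n + 1) := h (n + 1) (by omega) (by omega)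
    obtain ⟨t, ht⟩ := updown_concat (n : ℤ) (k (n + 1) - 1)
    obtain ⟨t', ht'⟩ := full_cons k d (n + 1)
    obtain ⟨t'', ht''⟩ := full_concat k d (n + 1)
    have e1 : full k n (d + 1)
        = (t ++ [(n : ℤ)]) ++ (((n : ℤ) + 1) :: (t' ++ [(n : ℤ)])) := by
      rw [full, ← ht, ht']
      push_cast
      simp
    have e2 : (((n : ℤ) + 1) :: (t' ++ [(n : ℤ)]))
        = (t'' ++ [((n : ℤ) + 1)]) ++ ((n : ℤ) :: []) := by
      have hcast : ((n : ℤ) + 1) = (((n + 1 : ℕ)) : ℤ) := by push_cast; rfl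
      have : ((n : ℤ) + 1) :: t' = t'' ++ [((n : ℤ) + 1)] := by
        rw [hcast, ← ht', ht'']
      simp [← this]
    have hcast : ((n : ℤ) + 1) = (((n + 1 : ℕ)) : ℤ) := by push_cast; rfl
    have e3 : crossCount (mm : ℤ) (t'' ++ [(n : ℤ) + 1])
        = crossCount (mm : ℤ) (full k (n + 1) d) := by
      rw [hcast, ← ht'']
    rw [e1, crossCount_snoc_append, e2, crossCount_snoc_append, ← ht, crossCount_updown, e3, ih]
    have h01 : crossCount (mm : ℤ) [(n : ℤ)] = 0 := rfl
    rw [h01]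
    by_cases hcase : mm = n + 1
    · subst hcase; split_ifs <;> omega
    · split_ifs <;> omega


lemma construct (M N : ℕ) (κ' : ℕ → ℕ) (hNle : N ≤ M) (hk'0 : κ' 0 = 1)
    (hzero : ∀ j, N < j → κ' j = 0)
    (F t s : List ℤ) (hfc : F = (0 : ℤ) :: t) (hfs : F = s ++ [(0 : ℤ)])
    (hmem : ∀ x ∈ F, (0 : ℤ) ≤ x ∧ x ≤ (N : ℤ))
    (hchain : List.Chain' (fun a b : ℤ => |b - a| = 1) F)
    (hcross : ∀ mm : ℕ, crossCount (mm : ℤ) F = if 0 < mm ∧ mm ≤ N then κ' mm else 0) :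
    IsScat M ((-1 : ℤ) :: (F ++ [(-1 : ℤ)])) ∧
    ∀ mm : ℕ, crossCount (mm : ℤ) ((-1 : ℤ) :: (F ++ [(-1 : ℤ)])) = κ' mm := by
  have hFlen : 1 ≤ F.length := by rw [hfc]; simp
  have hplen : ((-1 : ℤ) :: (F ++ [(-1 : ℤ)])).length = F.length + 2 := by simp
  have hent0 : ent ((-1 : ℤ) :: (F ++ [(-1 : ℤ)])) 0 = -1 := rfl
  have hentlast : ent ((-1 : ℤ) :: (F ++ [(-1 : ℤ)]))
      (((-1 : ℤ) :: (F ++ [(-1 : ℤ)])).length - 1) = -1 := by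
    rw [hplen]
    show ent (F ++ [(-1 : ℤ)]) F.length = -1
    unfold ent
    rw [List.getD_append_right _ _ _ _ le_rfl]
    simp
  have hmidmem : ∀ i, 1 ≤ i → i ≤ ((-1 : ℤ) :: (F ++ [(-1 : ℤ)])).length - 2 →
      ent ((-1 : ℤ) :: (F ++ [(-1 : ℤ)])) i ∈ F := by
    intro i h1 h2
    rw [hplen] at h2
    obtain ⟨j, rfl⟩ : ∃ j, i = j + 1 := ⟨i - 1, by omega⟩
    have hj : j < F.length := by omega
    show ent (F ++ [(-1 : ℤ)]) j ∈ F
    unfold ent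
    rw [List.getD_append _ _ _ _ hj, List.getD_eq_getElem _ _ hj]
    exact List.getElem_mem hj
  have hchain' : List.Chain' (fun a b : ℤ => |b - a| = 1) ((-1 : ℤ) :: (F ++ [(-1 : ℤ)])) := by
    unfold List.Chain'
    rw [List.isChain_cons]
    constructor
    · intro y hy
      rw [hfc] at hy
      simp only [List.cons_append, List.head?_cons, Option.mem_some_iff] at hy
      subst hy
      norm_num
    · apply List.IsChain.append hchain (List.isChain_singleton _)
      intro a ha b hb
      rw [hfs, List.getLast?_concat] at ha
      simp only [List.head?_cons, Option.mem_some_iff] at ha hb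
      subst ha; subst hb
      norm_num
  constructor
  · refine ⟨by omega, hent0, hentlast, ?_, ?_⟩
    · intro i h1 h2
      have hb := hmem _ (hmidmem i h1 h2)
      have hNM : (N : ℤ) ≤ (M : ℤ) := by exact_mod_cast hNle
      exact ⟨hb.1, by omega⟩
    · intro i hi
      rw [hplen] at hi
      have hilt : i < ((-1 : ℤ) :: (F ++ [(-1 : ℤ)])).length := by omega
      have hilt2 : i + 1 < ((-1 : ℤ) :: (F ++ [(-1 : ℤ)])).length := by omega
      have hch := List.isChain_iff_getElem.mp hchain' i (by rw [hplen]; omega)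
      have e1 : ent ((-1 : ℤ) :: (F ++ [(-1 : ℤ)])) i
          = ((-1 : ℤ) :: (F ++ [(-1 : ℤ)])).get ⟨i, hilt⟩ := by
        unfold ent
        rw [List.getD_eq_getElem _ _ hilt]
        rfl
      have e2 : ent ((-1 : ℤ) :: (F ++ [(-1 : ℤ)])) (i + 1)
          = ((-1 : ℤ) :: (F ++ [(-1 : ℤ)])).get ⟨i + 1, hilt2⟩ := by
        unfold ent
        rw [List.getD_eq_getElem _ _ hilt2]
        rfl
      rw [e1, e2]
      exact hch
  · intro mm
    have e1 : (-1 : ℤ) :: (F ++ [(-1 : ℤ)])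
        = (([] : List ℤ) ++ [(-1 : ℤ)]) ++ ((0 : ℤ) :: (t ++ [(-1 : ℤ)])) := by
      rw [hfc]; simp
    have e2 : ((0 : ℤ) :: (t ++ [(-1 : ℤ)])) = (s ++ [(0 : ℤ)]) ++ ((-1 : ℤ) :: []) := by
      have h3 : (0 : ℤ) :: t = s ++ [(0 : ℤ)] := by rw [← hfc, hfs]
      simp [← h3]
    have e3 : crossCount ((mm : ℕ) : ℤ) (s ++ [(0 : ℤ)]) = crossCount ((mm : ℕ) : ℤ) F := by
      rw [hfs]
    rw [e1, crossCount_snoc_append, e2, crossCount_snoc_append, e3, hcross]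
    have h5 : crossCount ((mm : ℕ) : ℤ) [(-1 : ℤ)] = 0 := rfl
    simp only [List.nil_append]
    rw [h5]
    by_cases hn0 : mm = 0
    · rw [hn0]
      simp [hk'0]
    · have hz := hzero mm
      split_ifs <;> omega

/-! ### The main theorem -/

/-- The image of `S_M` under the transit count map `κ` is exactly `𝔏_M`:
every `κ(p)` lies in `𝔏_M`, and every `k ∈ 𝔏_M` is realized by some
scattering sequence. -/
theorem kappa_range (M : ℕ) (hM : 1 ≤ M) :
    (∀ p : List ℤ, IsScat M p →
      kappa M p 0 = 1 ∧ ∀ n, kappa M p n = 0 → ktilde M (kappa M p) n = 0) ∧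
    (∀ k : Fin (M + 1) → ℕ, k 0 = 1 → (∀ n, k n = 0 → ktilde M k n = 0) →
      ∃ p : List ℤ, IsScat M p ∧ kappa M p = k) := by
  constructor
  · intro p hscat
    obtain ⟨hlen, h0, hlast, hint, hstep⟩ := hscat
    have hlen1 : 1 ≤ p.length := by omega
    have hkap : ∀ n : Fin (M + 1), kappa M p n = (startFin (((n : ℕ) : ℤ)) p).card := by
      intro n
      apply excSet_ncard p _ hlen1
      · rw [h0]; omega
      · rw [hlast]; omega
    constructor
    · rw [hkap 0]
      have hval : (((0 : Fin (M + 1)) : ℕ) : ℤ) = 0 := by simp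
      rw [hval]
      have hs : startFin 0 p = {1} := by
        ext a
        simp only [startFin, Finset.mem_filter, Finset.mem_range, Finset.mem_singleton]
        constructor
        · rintro ⟨hal, hap, hprev, hcur⟩
          by_contra hne
          have h2 : 2 ≤ a := by omega
          have := hint (a - 1) (by omega) (by omega)
          omega
        · rintro rfl
          have h1 := hint 1 le_rfl (by omega)
          exact ⟨by omega, one_pos, by norm_num [h0], h1.1⟩
      rw [hs, Finset.card_singleton]
    · intro n hn
      rcases Nat.lt_or_ge ((n : ℕ) + 1) (M + 1) with hlt | hge
      · rw [ktilde, dif_pos hlt]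
        by_contra hne
        rw [hkap ⟨(n : ℕ) + 1, hlt⟩] at hne
        have hne' : (startFin (((n : ℕ) : ℤ) + 1) p).Nonempty := by
          rw [← Finset.card_ne_zero]
          have hcast : (((n : ℕ) : ℤ) + 1)
              = (((⟨(n : ℕ) + 1, hlt⟩ : Fin (M + 1)) : ℕ) : ℤ) := by push_cast; rfl
          rw [hcast]
          exact hne
        have hnon := startFin_nonempty_of_le p ((n : ℕ) : ℤ) (((n : ℕ) : ℤ) + 1)
          (by omega) (by rw [h0]; omega) hne'
        rw [hkap n] at hn
        rw [Finset.card_eq_zero] at hn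
        rw [hn] at hnon
        exact absurd hnon (by simp)
      · rw [ktilde, dif_neg (by omega)]
  · intro k hk0 hsupp
    classical
    set κ' : ℕ → ℕ := fun j => if h : j < M + 1 then k ⟨j, h⟩ else 0 with hκ'
    have hk'0 : κ' 0 = 1 := by
      simp only [hκ', dif_pos (Nat.succ_pos M)]
      exact hk0
    have hstep : ∀ j, κ' j = 0 → κ' (j + 1) = 0 := by
      intro j hj
      by_cases h1 : j + 1 < M + 1
      · have h0j : j < M + 1 := by omega
        have hkj : k ⟨j, h0j⟩ = 0 := by
          simpa only [hκ', dif_pos h0j] using hj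
        have := hsupp ⟨j, h0j⟩ hkj
        rw [ktilde] at this
        simp only [hκ', dif_pos h1]
        simpa only [dif_pos h1] using this
      · simp [hκ', h1]
        intro h
        omega
    have hprop : ∀ a b, a ≤ b → κ' a = 0 → κ' b = 0 := by
      intro a b hab ha
      induction b, hab using Nat.le_induction with
      | base => exact ha
      | succ b hb ih => exact hstep b ih
    set N := Nat.findGreatest (fun j => κ' j ≠ 0) M with hN
    have hNle : N ≤ M := Nat.findGreatest_le M
    have hNspec : κ' N ≠ 0 := by
      have := Nat.findGreatest_spec (P := fun j => κ' j ≠ 0) (Nat.zero_le M)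
        (show κ' 0 ≠ 0 by rw [hk'0]; omega)
      simpa using this
    have hpos : ∀ j, j ≤ N → 1 ≤ κ' j := by
      intro j hj
      by_contra hc
      exact hNspec (hprop j N hj (by omega))
    have hzero : ∀ j, N < j → κ' j = 0 := by
      intro j hj
      by_cases hjM : j ≤ M
      · by_contra hc
        have := Nat.le_findGreatest (P := fun j => κ' j ≠ 0) hjM hc
        omega
      · simp only [hκ']
        rw [dif_neg (by omega)]
    obtain ⟨t, hfc⟩ := full_cons κ' N 0
    obtain ⟨s, hfs⟩ := full_concat κ' N 0
    rw [Nat.cast_zero] at hfc hfs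
    have hmem : ∀ x ∈ full κ' 0 N, (0 : ℤ) ≤ x ∧ x ≤ (N : ℤ) := by
      intro x hx
      have := full_mem κ' N 0 x hx
      push_cast at this
      omega
    have hcross : ∀ mm : ℕ, crossCount (mm : ℤ) (full κ' 0 N)
        = if 0 < mm ∧ mm ≤ N then κ' mm else 0 := by
      intro mm
      have := crossCount_full κ' N 0 (fun j h1 h2 => hpos j (by omega)) mm
      simpa using this
    obtain ⟨hscat, hcc⟩ := construct M N κ' hNle hk'0 hzero (full κ' 0 N) t s hfc hfs hmem
      (full_chain κ' N 0) hcross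
    refine ⟨(-1 : ℤ) :: (full κ' 0 N ++ [(-1 : ℤ)]), hscat, ?_⟩
    funext n
    obtain ⟨hl3, he0, hel, _, _⟩ := hscat
    have hkapn : kappa M ((-1 : ℤ) :: (full κ' 0 N ++ [(-1 : ℤ)])) n
        = (startFin (((n : ℕ) : ℤ)) ((-1 : ℤ) :: (full κ' 0 N ++ [(-1 : ℤ)]))).card := by
      apply excSet_ncard _ _ (by omega)
      · rw [he0]; omega
      · rw [hel]; omega
    rw [hkapn, startFin_card, hcc]
    simp only [hκ', dif_pos n.isLt]
end

section
/- Let M ≥ 1 be an integer, let R = (R_0, …, R_M) with −1 < R_j < 1 for all j, let 0 ≤ n ≤ M, and let k^n be the vector with k^n_j = 1 for 0 ≤ j ≤ n and k^n_j = 0 for n < j ≤ M. Then the sum of the weights w(p) over all scattering sequences p ∈ S_M with κ(p) = k^n equals R_n · ∏_{j=0}^{n−1} (1 − R_j²) (Kunetz's formula). -/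
/-- The weight factor attached to interior index `i` of the sequence `p`:
`R_j` if `p_{i-1} = p_{i+1} = p_i - 1`, `-R_j` if `p_{i-1} = p_{i+1} = p_i + 1`,
and the transmission coefficient `T_j = √(1 - R_j²)` otherwise (`j = p_i`). -/
noncomputable def wstep (R : ℤ → ℝ) (p : List ℤ) (i : ℕ) : ℝ :=
  if ent p (i - 1) = ent p i - 1 ∧ ent p (i + 1) = ent p i - 1 then R (ent p i)
  else if ent p (i - 1) = ent p i + 1 ∧ ent p (i + 1) = ent p i + 1 then -R (ent p i)
  else Real.sqrt (1 - R (ent p i) ^ 2)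

/-- The weight of a scattering sequence `p = (p_0, ..., p_L)`:
the product of the factors `w_i` for `1 ≤ i ≤ L - 1`. -/
noncomputable def weight (R : ℤ → ℝ) (p : List ℤ) : ℝ :=
  ∏ i ∈ Finset.Icc 1 (p.length - 2), wstep R p i

/- ### Auxiliary lemmas -/

lemma step_cases {x y : ℤ} (h : |x - y| = 1) : x = y + 1 ∨ x = y - 1 := by
  rcases (abs_eq (by norm_num : (0:ℤ) ≤ 1)).mp h with h' | h' <;> omega

lemma excSet_finite (p : List ℤ) (d : ℤ) : (excSet p d).Finite := by
  apply Set.Finite.subset ((Set.finite_Iic (p.length - 1)).prod (Set.finite_Iic (p.length - 1)))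
  rintro ⟨a, b⟩ ⟨h1, h2, -⟩
  exact ⟨le_trans h1 h2, h2⟩

open Classical in
lemma exists_exc (p : List ℤ) (d : ℤ) (h0 : ent p 0 < d) {i : ℕ}
    (hi : i ≤ p.length - 1) (hpi : d ≤ ent p i) :
    ∃ ab ∈ excSet p d, ab.1 ≤ i ∧ i ≤ ab.2 := by
  have hPi : ∀ k, i ≤ k → k ≤ i → d ≤ ent p k := by
    intro k hk hk'
    have : k = i := le_antisymm hk' hk
    subst this; exact hpi
  have hPi' : ∀ k, i ≤ k → k ≤ i → d ≤ ent p k := hPi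
  have hex : ∃ a, ∀ k, a ≤ k → k ≤ i → d ≤ ent p k := ⟨i, fun k hk hk' => hPi k hk hk'⟩
  have hPa := Nat.find_spec hex
  set a := Nat.find hex with ha
  have hai : a ≤ i := Nat.find_min' hex (fun k hk hk' => hPi k hk hk')
  have hapos : 0 < a := by
    rcases Nat.eq_zero_or_pos a with h | h
    · exfalso
      have := hPa 0 (by omega) (by omega)
      omega
    · exact h
  have hprev : ent p (a - 1) < d := by
    have hmin := Nat.find_min hex (m := a - 1) (by omega)
    push_neg at hmin
    obtain ⟨k, hk1, hk2, hk3⟩ := hmin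
    have hk : k = a - 1 := by
      by_contra h'
      exact absurd (hPa k (by omega) hk2) (not_le.mpr hk3)
    exact hk ▸ hk3
  -- right endpoint
  have hQb := Nat.findGreatest_spec (P := fun b' => ∀ k, i ≤ k → k ≤ b' → d ≤ ent p k)
    (n := p.length - 1) hi hPi'
  set b := Nat.findGreatest (fun b' => ∀ k, i ≤ k → k ≤ b' → d ≤ ent p k) (p.length - 1) with hb
  have hib : i ≤ b := Nat.le_findGreatest hi hPi'
  have hbL : b ≤ p.length - 1 := Nat.findGreatest_le _
  have hnext : b = p.length - 1 ∨ ent p (b + 1) < d := by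
    rcases eq_or_lt_of_le hbL with h | h
    · exact Or.inl h
    · right
      have hng := Nat.findGreatest_is_greatest
        (P := fun b' => ∀ k, i ≤ k → k ≤ b' → d ≤ ent p k)
        (n := p.length - 1) (k := b + 1) (by omega) (by omega)
      have hng' : ¬ ∀ k, i ≤ k → k ≤ b + 1 → d ≤ ent p k := hng
      push_neg at hng'
      obtain ⟨k, hk1, hk2, hk3⟩ := hng'
      have hk : k = b + 1 := by
        by_contra h'
        exact absurd (hQb k hk1 (by omega)) (not_le.mpr hk3)
      exact hk ▸ hk3
  refine ⟨(a, b), ⟨le_trans hai hib, hbL, ?_, Or.inr hprev, hnext⟩, hai, hib⟩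
  intro k hk1 hk2
  rcases le_or_gt k i with h | h
  · exact hPa k hk1 h
  · exact hQb k h.le hk2

lemma cover (p : List ℤ) (d : ℤ) {ab : ℕ × ℕ} (hs : excSet p d = {ab})
    (h0 : ent p 0 < d) {i : ℕ} (hi : i ≤ p.length - 1) (hpi : d ≤ ent p i) :
    ab.1 ≤ i ∧ i ≤ ab.2 := by
  obtain ⟨cd, hcd, h1, h2⟩ := exists_exc p d h0 hi hpi
  rw [hs, Set.mem_singleton_iff] at hcd
  subst hcd; exact ⟨h1, h2⟩

/- ### The canonical tent sequence -/

def cfun (N : ℕ) (i : ℕ) : ℤ := if i ≤ N + 1 then (i : ℤ) - 1 else 2 * N + 1 - i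

def clist (N : ℕ) : List ℤ := List.ofFn (fun i : Fin (2 * N + 3) => cfun N i)

lemma clist_length (N : ℕ) : (clist N).length = 2 * N + 3 := by
  simp [clist]

lemma ent_clist (N i : ℕ) (h : i < 2 * N + 3) : ent (clist N) i = cfun N i := by
  rw [ent, List.getD_eq_getElem _ _ (by rw [clist_length]; exact h)]
  simp only [clist, List.getElem_ofFn]

lemma exc_clist (N j : ℕ) (hj : j ≤ N) :
    excSet (clist N) (j : ℤ) = {(1 + j, 2 * N + 1 - j)} := by
  ext ⟨a, b⟩
  simp only [excSet, Set.mem_setOf_eq, Set.mem_singleton_iff, Prod.mk.injEq, clist_length]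
  constructor
  · rintro ⟨hab, hbL, hall, hleft, hright⟩
    have hbne : b ≠ 2 * N + 2 := by
      intro h
      have := hall b hab le_rfl
      rw [h, ent_clist _ _ (by omega)] at this
      simp only [cfun] at this
      split_ifs at this <;> omega
    have hb2 : b ≤ 2 * N + 1 := by omega
    have hane : a ≠ 0 := by
      intro h
      have := hall a le_rfl hab
      rw [h, ent_clist _ _ (by omega)] at this
      simp only [cfun] at this
      split_ifs at this <;> omega
    have hL : ent (clist N) (a - 1) < (j : ℤ) := hleft.resolve_left hane
    have hRt : ent (clist N) (b + 1) < (j : ℤ) := by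
      rcases hright with h | h
      · omega
      · exact h
    have ea : ent (clist N) a = cfun N a := ent_clist _ _ (by omega)
    have ea' : ent (clist N) (a - 1) = cfun N (a - 1) := ent_clist _ _ (by omega)
    have eb : ent (clist N) b = cfun N b := ent_clist _ _ (by omega)
    have eb' : ent (clist N) (b + 1) = cfun N (b + 1) := ent_clist _ _ (by omega)
    have ha1 := hall a le_rfl hab
    have hb1 := hall b hab le_rfl
    rw [ea] at ha1; rw [ea'] at hL; rw [eb] at hb1; rw [eb'] at hRt
    simp only [cfun] at ha1 hb1 hL hRt
    split_ifs at ha1 hb1 hL hRt <;> omega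
  · rintro ⟨ha, hb⟩
    subst ha; subst hb
    refine ⟨by omega, by omega, ?_, Or.inr ?_, Or.inr ?_⟩
    · intro i hi1 hi2
      rw [ent_clist _ _ (by omega)]
      simp only [cfun]
      split_ifs <;> omega
    · have : 1 + j - 1 = j := by omega
      rw [this, ent_clist _ _ (by omega)]
      simp only [cfun]
      split_ifs <;> omega
    · have : 2 * N + 1 - j + 1 = 2 * N + 2 - j := by omega
      rw [this, ent_clist _ _ (by omega)]
      simp only [cfun]
      split_ifs <;> omega

lemma exc_clist_empty (N j : ℕ) (hj : N < j) : excSet (clist N) (j : ℤ) = ∅ := by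
  ext ⟨a, b⟩
  simp only [excSet, Set.mem_setOf_eq, Set.mem_empty_iff_false, iff_false, not_and, clist_length]
  intro hab hbL hall
  exfalso
  have := hall a le_rfl hab
  rw [ent_clist _ _ (by omega)] at this
  simp only [cfun] at this
  split_ifs at this <;> omega

lemma isScat_clist (M N : ℕ) (hN : N ≤ M) : IsScat M (clist N) := by
  refine ⟨by rw [clist_length]; omega, ?_, ?_, ?_, ?_⟩
  · rw [ent_clist _ _ (by omega)]; simp [cfun]
  · rw [clist_length]
    have : 2 * N + 3 - 1 = 2 * N + 2 := by omega
    rw [this, ent_clist _ _ (by omega)]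
    simp only [cfun]
    split_ifs <;> omega
  · intro i hi1 hi2
    rw [clist_length] at hi2
    rw [ent_clist _ _ (by omega)]
    simp only [cfun]
    constructor <;> (split_ifs <;> omega)
  · intro i hi
    rw [clist_length] at hi
    rw [ent_clist _ _ (by omega), ent_clist _ _ (by omega)]
    simp only [cfun]
    rw [abs_eq (by norm_num : (0:ℤ) ≤ 1)]
    split_ifs <;> omega

lemma wstep_lo (R : ℤ → ℝ) (N i : ℕ) (h1 : 1 ≤ i) (h2 : i ≤ N) :
    wstep R (clist N) i = Real.sqrt (1 - R ((i : ℤ) - 1) ^ 2) := by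
  have e1 : ent (clist N) (i - 1) = (i : ℤ) - 2 := by
    rw [ent_clist _ _ (by omega)]; simp only [cfun]; split_ifs <;> omega
  have e2 : ent (clist N) i = (i : ℤ) - 1 := by
    rw [ent_clist _ _ (by omega)]; simp only [cfun]; split_ifs <;> omega
  have e3 : ent (clist N) (i + 1) = (i : ℤ) := by
    rw [ent_clist _ _ (by omega)]; simp only [cfun]; split_ifs <;> omega
  rw [wstep, e1, e2, e3, if_neg (by omega), if_neg (by omega)]

lemma wstep_mid (R : ℤ → ℝ) (N : ℕ) :
    wstep R (clist N) (N + 1) = R (N : ℤ) := by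
  have e1 : ent (clist N) (N + 1 - 1) = (N : ℤ) - 1 := by
    rw [ent_clist _ _ (by omega)]; simp only [cfun]; split_ifs <;> omega
  have e2 : ent (clist N) (N + 1) = (N : ℤ) := by
    rw [ent_clist _ _ (by omega)]; simp only [cfun]; split_ifs <;> omega
  have e3 : ent (clist N) (N + 1 + 1) = (N : ℤ) - 1 := by
    rw [ent_clist _ _ (by omega)]; simp only [cfun]; split_ifs <;> omega
  rw [wstep, e1, e2, e3, if_pos (by omega)]

lemma wstep_hi (R : ℤ → ℝ) (N i : ℕ) (h1 : N + 2 ≤ i) (h2 : i ≤ 2 * N + 1) :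
    wstep R (clist N) i = Real.sqrt (1 - R (2 * (N : ℤ) + 1 - (i : ℤ)) ^ 2) := by
  have e1 : ent (clist N) (i - 1) = 2 * (N : ℤ) + 2 - (i : ℤ) := by
    rw [ent_clist _ _ (by omega)]; simp only [cfun]; split_ifs <;> omega
  have e2 : ent (clist N) i = 2 * (N : ℤ) + 1 - (i : ℤ) := by
    rw [ent_clist _ _ (by omega)]; simp only [cfun]; split_ifs <;> omega
  have e3 : ent (clist N) (i + 1) = 2 * (N : ℤ) - (i : ℤ) := by
    rw [ent_clist _ _ (by omega)]; simp only [cfun]; split_ifs <;> omega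
  rw [wstep, e1, e2, e3, if_neg (by omega), if_neg (by omega)]

lemma weight_clist (R : ℤ → ℝ) (N : ℕ)
    (hsq : ∀ j : ℕ, j < N → R (j : ℤ) ^ 2 ≤ 1) :
    weight R (clist N) = R (N : ℤ) * ∏ j ∈ Finset.range N, (1 - R (j : ℤ) ^ 2) := by
  rw [weight, clist_length]
  have hlen : 2 * N + 3 - 2 = 2 * N + 1 := by omega
  rw [hlen]
  rw [← Finset.Ico_add_one_right_eq_Icc, Finset.prod_Ico_eq_prod_range]
  have hcard : 2 * N + 1 + 1 - 1 = N + (N + 1) := by omega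
  rw [hcard, Finset.prod_range_add]
  have h1 : ∏ i ∈ Finset.range N, wstep R (clist N) (1 + i)
      = ∏ i ∈ Finset.range N, Real.sqrt (1 - R (i : ℤ) ^ 2) := by
    apply Finset.prod_congr rfl
    intro i hi
    rw [Finset.mem_range] at hi
    rw [wstep_lo R N (1 + i) (by omega) (by omega)]
    congr 2
    push_cast; ring
  have h2 : ∏ i ∈ Finset.range (N + 1), wstep R (clist N) (1 + (N + i))
      = R (N : ℤ) * ∏ i ∈ Finset.range N, Real.sqrt (1 - R (i : ℤ) ^ 2) := by
    rw [Finset.prod_range_succ']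
    have hz : (1 + (N + 0)) = N + 1 := by omega
    rw [hz, wstep_mid]
    rw [mul_comm]
    congr 1
    rw [← Finset.prod_range_reflect (fun j => Real.sqrt (1 - R (j : ℤ) ^ 2)) N]
    apply Finset.prod_congr rfl
    intro i hi
    rw [Finset.mem_range] at hi
    have hz2 : 1 + (N + (i + 1)) = N + 2 + i := by omega
    rw [hz2, wstep_hi R N (N + 2 + i) (by omega) (by omega)]
    congr 2
    have : ((N - 1 - i : ℕ) : ℤ) = (N : ℤ) - 1 - i := by omega
    rw [this]
    push_cast; ring
  rw [h1, h2, mul_left_comm]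
  congr 1
  rw [← Finset.prod_mul_distrib]
  apply Finset.prod_congr rfl
  intro i hi
  rw [Finset.mem_range] at hi
  exact Real.mul_self_sqrt (by have := hsq i hi; nlinarith [hsq i hi])

lemma scat_eq_clist (M : ℕ) {p : List ℤ} (N : ℕ) (hNM : N ≤ M)
    (hscat : IsScat M p)
    (hk : ∀ j : ℕ, j ≤ M → (excSet p (j : ℤ)).ncard = if j ≤ N then 1 else 0) :
    p = clist N := by
  obtain ⟨hL, h0, hend, hint, hstep⟩ := hscat
  -- global bound : all entries are ≤ N
  have hbd : ∀ i, i ≤ p.length - 1 → ent p i ≤ (N : ℤ) := by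
    intro i hi
    rcases eq_or_lt_of_le hNM with hNM' | hNM'
    · -- N = M : use the interior bound
      by_cases hi0 : i = 0
      · rw [hi0, h0]; omega
      · by_cases hiL : i = p.length - 1
        · rw [hiL, hend]; omega
        · have := (hint i (by omega) (by omega)).2
          omega
    · -- N < M : the excursion set at depth N + 1 is empty
      have hemp : excSet p ((N + 1 : ℕ) : ℤ) = ∅ := by
        have h := hk (N + 1) (by omega)
        rw [if_neg (by omega)] at h
        exact (Set.ncard_eq_zero (excSet_finite p _)).mp h
      by_contra hcon
      obtain ⟨ab, hab, -⟩ := exists_exc p ((N + 1 : ℕ) : ℤ)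
        (by rw [h0]; push_cast; omega) hi (by push_cast; omega)
      rw [hemp] at hab
      exact hab
  -- the nested-excursion induction
  have main : ∀ j : ℕ, j ≤ N →
      excSet p (j : ℤ) = {(1 + j, p.length - 2 - j)} ∧
      ent p (1 + j) = (j : ℤ) ∧ ent p (p.length - 2 - j) = (j : ℤ) := by
    intro j
    induction j with
    | zero =>
      intro _
      obtain ⟨ab, hab⟩ := Set.ncard_eq_one.mp (by rw [hk 0 (by omega), if_pos (by omega)])
      have hmem : ab ∈ excSet p ((0 : ℕ) : ℤ) := by rw [hab]; rfl
      obtain ⟨h1, h2, h3, h4, h5⟩ := hmem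
      have hane : ab.1 ≠ 0 := by
        intro h
        have := h3 ab.1 le_rfl h1
        rw [h, h0] at this
        omega
      have hbne : ab.2 ≠ p.length - 1 := by
        intro h
        have := h3 ab.2 h1 le_rfl
        rw [h, hend] at this
        omega
      have hc1 := cover p ((0:ℕ):ℤ) hab (by rw [h0]; omega) (i := 1) (by omega)
        (by have := (hint 1 le_rfl (by omega)).1; push_cast; omega)
      have hc2 := cover p ((0:ℕ):ℤ) hab (by rw [h0]; omega) (i := p.length - 2) (by omega)
        (by have := (hint (p.length - 2) (by omega) le_rfl).1; push_cast; omega)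
      have habv : ab = (1, p.length - 2) := by
        have := h2
        obtain ⟨a, b⟩ := ab
        simp only [Prod.mk.injEq]
        constructor <;> omega
      have he1 : ent p 1 = ((0:ℕ) : ℤ) := by
        have hs1 := hstep 0 (by omega)
        norm_num at hs1
        rcases step_cases hs1 with h | h <;>
          · rw [h0] at h
            have := (hint 1 le_rfl (by omega)).1
            push_cast
            omega
      have he2 : ent p (p.length - 2) = ((0:ℕ) : ℤ) := by
        have hs1 := hstep (p.length - 2) (by omega)
        have hrw : p.length - 2 + 1 = p.length - 1 := by omega
        rw [hrw, hend] at hs1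
        rcases step_cases hs1 with h | h <;>
          · have := (hint (p.length - 2) (by omega) le_rfl).1
            push_cast
            omega
      rw [habv] at hab
      have hrw0 : (1, p.length - 2) = (1 + 0, p.length - 2 - 0) := by simp
      rw [hrw0] at hab
      exact ⟨hab, by simpa using he1, by simpa using he2⟩
    | succ j ih =>
      intro hj
      obtain ⟨hs, hl, hr⟩ := ih (by omega)
      have hmemj : (1 + j, p.length - 2 - j) ∈ excSet p (j : ℤ) := by rw [hs]; rfl
      obtain ⟨g1, g2, g3, g4, g5⟩ := hmemj
      obtain ⟨ab, hab⟩ := Set.ncard_eq_one.mp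
        (by rw [hk (j + 1) (by omega), if_pos (by omega)])
      have hmem : ab ∈ excSet p ((j + 1 : ℕ) : ℤ) := by rw [hab]; rfl
      obtain ⟨h1, h2, h3, h4, h5⟩ := hmem
      -- ab is contained in the depth-j excursion
      have hA : 1 + j ≤ ab.1 ∧ ab.1 ≤ p.length - 2 - j := by
        have := cover p (j : ℤ) hs (by rw [h0]; omega) (i := ab.1) (by omega)
          (by have := h3 ab.1 le_rfl h1; push_cast at this ⊢; omega)
        simpa using this
      have hB : 1 + j ≤ ab.2 ∧ ab.2 ≤ p.length - 2 - j := by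
        have := cover p (j : ℤ) hs (by rw [h0]; omega) (i := ab.2) (by omega)
          (by have := h3 ab.2 h1 le_rfl; push_cast at this ⊢; omega)
        simpa using this
      have hane : ab.1 ≠ 1 + j := by
        intro h
        have := h3 ab.1 le_rfl h1
        rw [h, hl] at this
        push_cast at this
        omega
      have hbne : ab.2 ≠ p.length - 2 - j := by
        intro h
        have := h3 ab.2 h1 le_rfl
        rw [h, hr] at this
        push_cast at this
        omega
      have ha2 : 2 + j ≤ ab.1 := by omega
      have hb2 : ab.2 ≤ p.length - 3 - j := by omega
      have hord : 2 + j ≤ p.length - 3 - j := by omega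
      -- entry at 2 + j is j + 1
      have he1 : ent p (2 + j) = ((j + 1 : ℕ) : ℤ) := by
        have hs1 := hstep (1 + j) (by omega)
        have hrw : 1 + j + 1 = 2 + j := by omega
        rw [hrw, hl] at hs1
        have hin := g3 (2 + j) (by omega) (by omega)
        rcases step_cases hs1 with h | h <;> push_cast <;> omega
      -- entry at p.length - 3 - j is j + 1
      have he2 : ent p (p.length - 3 - j) = ((j + 1 : ℕ) : ℤ) := by
        have hs1 := hstep (p.length - 3 - j) (by omega)
        have hrw : p.length - 3 - j + 1 = p.length - 2 - j := by omega
        rw [hrw, hr] at hs1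
        have hin := g3 (p.length - 3 - j) (by omega) (by omega)
        rcases step_cases hs1 with h | h <;> push_cast <;> omega
      -- cover at depth j + 1
      have hc1 := cover p ((j + 1 : ℕ) : ℤ) hab (by rw [h0]; push_cast; omega)
        (i := 2 + j) (by omega) (le_of_eq he1.symm)
      have hc2 := cover p ((j + 1 : ℕ) : ℤ) hab (by rw [h0]; push_cast; omega)
        (i := p.length - 3 - j) (by omega) (le_of_eq he2.symm)
      have habv : ab = (1 + (j + 1), p.length - 2 - (j + 1)) := by
        obtain ⟨a, b⟩ := ab
        simp only [Prod.mk.injEq]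
        constructor <;> omega
      rw [habv] at hab
      refine ⟨hab, ?_, ?_⟩
      · have hrw : 1 + (j + 1) = 2 + j := by omega
        rw [hrw]; exact he1
      · have hrw : p.length - 2 - (j + 1) = p.length - 3 - j := by omega
        rw [hrw]; exact he2
  -- conclude the length
  obtain ⟨hsN, hlN, hrN⟩ := main N le_rfl
  have hmemN : (1 + N, p.length - 2 - N) ∈ excSet p (N : ℤ) := by rw [hsN]; rfl
  obtain ⟨g1, g2, g3, g4, g5⟩ := hmemN
  have hLen : p.length = 2 * N + 3 := by
    by_contra hcon
    have hlt : 2 + N ≤ p.length - 2 - N := by omega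
    have hin := g3 (2 + N) (by omega) (by omega)
    have hub := hbd (2 + N) (by omega)
    have heq : ent p (2 + N) = (N : ℤ) := le_antisymm hub hin
    have hs1 := hstep (1 + N) (by omega)
    have hrw : 1 + N + 1 = 2 + N := by omega
    rw [hrw, hlN, heq] at hs1
    simp at hs1
  -- entries agree
  apply List.ext_getElem (by rw [hLen, clist_length])
  intro i hi1 hi2
  rw [clist_length] at hi2
  have hpe : p[i] = ent p i := (List.getD_eq_getElem p 0 hi1).symm
  have hce : (clist N)[i]'(by rw [clist_length]; exact hi2) = cfun N i := by
    have := ent_clist N i hi2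
    rw [ent, List.getD_eq_getElem _ _ (by rw [clist_length]; exact hi2)] at this
    exact this
  rw [hpe, hce]
  by_cases hi0 : i = 0
  · rw [hi0, h0]; simp [cfun]
  · by_cases hitop : i = 2 * N + 2
    · have : i = p.length - 1 := by omega
      rw [this, hend]
      simp only [cfun]
      split_ifs <;> omega
    · by_cases hilo : i ≤ N + 1
      · obtain ⟨-, he, -⟩ := main (i - 1) (by omega)
        have hrw : 1 + (i - 1) = i := by omega
        rw [hrw] at he
        rw [he]
        simp only [cfun]
        split_ifs <;> omega
      · obtain ⟨-, -, he⟩ := main (2 * N + 1 - i) (by omega)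
        have hrw : p.length - 2 - (2 * N + 1 - i) = i := by omega
        rw [hrw] at he
        rw [he]
        simp only [cfun]
        split_ifs <;> omega

/-- Kunetz's formula: the sum of the weights of all scattering sequences with
the primary transit count vector `kⁿ` equals `R_n · ∏_{j<n} (1 - R_j²)`. -/
theorem kunetz_formula (M : ℕ) (hM : 1 ≤ M) (R : ℤ → ℝ)
    (hR : ∀ j : Fin (M + 1), -1 < R ((j : ℕ) : ℤ) ∧ R ((j : ℕ) : ℤ) < 1)
    (n : Fin (M + 1)) :
    {p : List ℤ | IsScat M p ∧
      kappa M p = fun j : Fin (M + 1) => if (j : ℕ) ≤ (n : ℕ) then 1 else 0}.Finite ∧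
    ∑ᶠ p ∈ {p : List ℤ | IsScat M p ∧
        kappa M p = fun j : Fin (M + 1) => if (j : ℕ) ≤ (n : ℕ) then 1 else 0}, weight R p =
      R ((n : ℕ) : ℤ) * ∏ j ∈ Finset.range (n : ℕ), (1 - R (j : ℤ) ^ 2) := by
  set N : ℕ := (n : ℕ) with hN
  have hNM : N ≤ M := by omega
  have hset : {p : List ℤ | IsScat M p ∧
      kappa M p = fun j : Fin (M + 1) => if (j : ℕ) ≤ (n : ℕ) then 1 else 0}
      = {clist N} := by
    ext p
    simp only [Set.mem_setOf_eq, Set.mem_singleton_iff]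
    constructor
    · rintro ⟨hscat, hkap⟩
      apply scat_eq_clist M N hNM hscat
      intro j hj
      have := congrFun hkap ⟨j, by omega⟩
      simpa [kappa] using this
    · rintro rfl
      refine ⟨isScat_clist M N hNM, ?_⟩
      funext j
      simp only [kappa]
      by_cases hj : (j : ℕ) ≤ N
      · rw [exc_clist N j hj, if_pos hj, Set.ncard_singleton]
      · rw [exc_clist_empty N j (by omega), if_neg hj, Set.ncard_empty]
  constructor
  · rw [hset]; exact Set.finite_singleton _
  · rw [hset, finsum_mem_singleton]
    apply weight_clist
    intro j hj
    have := hR ⟨j, by omega⟩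
    simp only [Fin.val_mk] at this
    nlinarith [this.1, this.2]
end

section
/- Let M ≥ 1 be an integer and let k ∈ 𝔏_M, with k̃ = (k_1, …, k_M, 0) and u = min{𝟙, k̃}. Consider the multivariate polynomial in variables X_0, …, X_M over the rationals defined by P_k = Σ_{b : u ≤ b ≤ min{k, k̃}} binom(k, b) · binom(k̃ − u, b − u) · (−X)^{k̃−b} · X^{k−b} · (𝟙 − X²)^{b}, where (−X)^{d} = ∏_n (−X_n)^{d_n}, X^{d} = ∏_n X_n^{d_n}, and (𝟙 − X²)^{b} = ∏_n (1 − X_n²)^{b_n}. Then P_k has total degree exactly Σ_{n=0}^{M} (k_n + k̃_n). -/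
open Polynomial in
lemma aux_coeff (c : ℚ) (A E S : ℕ) :
    (Polynomial.C c * (-Polynomial.X) ^ A * Polynomial.X ^ E *
      (1 - Polynomial.X ^ 2 : Polynomial ℚ) ^ S).coeff (A + E + 2 * S) =
      c * (-1) ^ (A + S) := by
  have h1 : (Polynomial.C c * (-Polynomial.X) ^ A * Polynomial.X ^ E *
      (1 - Polynomial.X ^ 2 : Polynomial ℚ) ^ S) =
      Polynomial.C (c * (-1) ^ A) *
        (Polynomial.X ^ (A + E) * (1 - Polynomial.X ^ 2 : Polynomial ℚ) ^ S) := by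
    rw [neg_pow]
    simp [pow_add]
    ring
  rw [h1, Polynomial.coeff_C_mul]
  have h2 : A + E + 2 * S = 2 * S + (A + E) := by omega
  rw [h2, Polynomial.coeff_X_pow_mul]
  have h3 : ((1 - Polynomial.X ^ 2 : Polynomial ℚ) ^ S).coeff (2 * S) = (-1) ^ S := by
    have hne : (1 - Polynomial.X ^ 2 : Polynomial ℚ) = -(Polynomial.X ^ 2 - Polynomial.C 1) := by
      rw [Polynomial.C_1]; ring
    have hnd : (1 - Polynomial.X ^ 2 : Polynomial ℚ).natDegree = 2 := by
      rw [hne, natDegree_neg, natDegree_X_pow_sub_C]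
    have hlc : (1 - Polynomial.X ^ 2 : Polynomial ℚ).leadingCoeff = -1 := by
      rw [hne, leadingCoeff_neg, (monic_X_pow_sub_C (1:ℚ) (by norm_num)).leadingCoeff]
    have hd : ((1 - Polynomial.X ^ 2 : Polynomial ℚ) ^ S).natDegree = 2 * S := by
      rw [Polynomial.natDegree_pow, hnd]; ring
    rw [← hd, Polynomial.coeff_natDegree, Polynomial.leadingCoeff_pow, hlc]
  rw [h3, pow_add]
  ring

lemma aux_natDegree_aeval_le {σ : Type*} (p : MvPolynomial σ ℚ) :
    (MvPolynomial.aeval (fun _ : σ => (Polynomial.X : Polynomial ℚ)) p).natDegree ≤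
      p.totalDegree := by
  classical
  conv_lhs => rw [p.as_sum]
  rw [map_sum]
  apply Polynomial.natDegree_sum_le_of_forall_le
  intro d hd
  rw [MvPolynomial.aeval_monomial]
  have h1 : (d.prod fun _ k => (Polynomial.X : Polynomial ℚ) ^ k) =
      Polynomial.X ^ (d.sum fun _ k => k) := by
    rw [Finsupp.prod, Finsupp.sum, Finset.prod_pow_eq_pow_sum]
  rw [h1, Polynomial.algebraMap_eq]
  exact le_trans ((Polynomial.natDegree_C_mul_le _ _).trans (Polynomial.natDegree_X_pow _).le)
    (MvPolynomial.le_totalDegree hd)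


open MvPolynomial in
/-- The reflection amplitude `a(R, k)`, viewed as a polynomial in the
reflection coefficients, has total degree exactly `Σ_n (k_n + k̃_n)`. -/
theorem amplitude_total_degree (M : ℕ) (hM : 1 ≤ M)
    (k : Fin (M + 1) → ℕ) (hk0 : k 0 = 1) (hk1 : ∀ n, k n = 0 → ktilde M k n = 0) :
    (∑ b ∈ Finset.Icc (fun n => min 1 (ktilde M k n))
        (fun n => min (k n) (ktilde M k n)),
      ∏ n : Fin (M + 1),
        (((k n).choose (b n) *
          (ktilde M k n - min 1 (ktilde M k n)).choose
            (b n - min 1 (ktilde M k n)) : ℕ) : MvPolynomial (Fin (M + 1)) ℚ) *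
          (-(X n : MvPolynomial (Fin (M + 1)) ℚ)) ^ (ktilde M k n - b n) *
          (X n : MvPolynomial (Fin (M + 1)) ℚ) ^ (k n - b n) *
          (1 - (X n : MvPolynomial (Fin (M + 1)) ℚ) ^ 2) ^ (b n)).totalDegree =
      ∑ n : Fin (M + 1), (k n + ktilde M k n) := by
  classical
  set c : (Fin (M+1) → ℕ) → Fin (M+1) → ℕ := fun b n =>
    (k n).choose (b n) * (ktilde M k n - min 1 (ktilde M k n)).choose
      (b n - min 1 (ktilde M k n)) with hc
  have hbk : ∀ b ∈ Finset.Icc (fun n => min 1 (ktilde M k n))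
      (fun n => min (k n) (ktilde M k n)),
      ∀ n : Fin (M+1), min 1 (ktilde M k n) ≤ b n ∧ b n ≤ k n ∧ b n ≤ ktilde M k n := by
    intro b hb n
    rw [Finset.mem_Icc] at hb
    have h1 := hb.1 n
    have h2 := hb.2 n
    exact ⟨h1, h2.trans (min_le_left _ _), h2.trans (min_le_right _ _)⟩
  apply le_antisymm
  · -- upper bound
    apply MvPolynomial.totalDegree_finsetSum_le
    intro b hb
    refine (MvPolynomial.totalDegree_finset_prod _ _).trans (Finset.sum_le_sum ?_)
    intro n _
    obtain ⟨h1, h2, h3⟩ := hbk b hb n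
    have b1 : ((((k n).choose (b n) *
          (ktilde M k n - min 1 (ktilde M k n)).choose
            (b n - min 1 (ktilde M k n)) : ℕ)) :
          MvPolynomial (Fin (M+1)) ℚ).totalDegree = 0 := by
      rw [← MvPolynomial.C_eq_coe_nat]; exact MvPolynomial.totalDegree_C _
    have b2 : ((-(X n : MvPolynomial (Fin (M+1)) ℚ)) ^ (ktilde M k n - b n)).totalDegree
        ≤ ktilde M k n - b n := by
      refine (MvPolynomial.totalDegree_pow _ _).trans ?_
      rw [MvPolynomial.totalDegree_neg, MvPolynomial.totalDegree_X, mul_one]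
    have b3 : ((X n : MvPolynomial (Fin (M+1)) ℚ) ^ (k n - b n)).totalDegree
        ≤ k n - b n := (MvPolynomial.totalDegree_X_pow _ _).le
    have b4 : ((1 - (X n : MvPolynomial (Fin (M+1)) ℚ) ^ 2) ^ (b n)).totalDegree
        ≤ 2 * b n := by
      refine (MvPolynomial.totalDegree_pow _ _).trans ?_
      have : (1 - (X n : MvPolynomial (Fin (M+1)) ℚ) ^ 2).totalDegree ≤ 2 := by
        rw [sub_eq_add_neg]
        refine (MvPolynomial.totalDegree_add _ _).trans ?_
        simp [MvPolynomial.totalDegree_neg, MvPolynomial.totalDegree_X_pow]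
      calc b n * (1 - (X n : MvPolynomial (Fin (M+1)) ℚ) ^ 2).totalDegree
          ≤ b n * 2 := Nat.mul_le_mul_left _ this
        _ = 2 * b n := Nat.mul_comm _ _
    refine le_trans (MvPolynomial.totalDegree_mul _ _) (le_trans (add_le_add
      (le_trans (MvPolynomial.totalDegree_mul _ _) (add_le_add
        (le_trans (MvPolynomial.totalDegree_mul _ _) (add_le_add b1.le b2)) b3)) b4) ?_)
    omega
  · -- lower bound
    set φ : MvPolynomial (Fin (M+1)) ℚ →ₐ[ℚ] Polynomial ℚ :=
      MvPolynomial.aeval (fun _ : Fin (M+1) => (Polynomial.X : Polynomial ℚ)) with hφ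
    refine le_trans (Polynomial.le_natDegree_of_ne_zero ?_) (aux_natDegree_aeval_le _)
    rw [map_sum, Polynomial.finset_sum_coeff]
    have hterm : ∀ b ∈ Finset.Icc (fun n => min 1 (ktilde M k n))
        (fun n => min (k n) (ktilde M k n)),
        (φ (∏ n : Fin (M + 1),
          (((k n).choose (b n) *
            (ktilde M k n - min 1 (ktilde M k n)).choose
              (b n - min 1 (ktilde M k n)) : ℕ) : MvPolynomial (Fin (M + 1)) ℚ) *
            (-(X n : MvPolynomial (Fin (M + 1)) ℚ)) ^ (ktilde M k n - b n) *
            (X n : MvPolynomial (Fin (M + 1)) ℚ) ^ (k n - b n) *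
            (1 - (X n : MvPolynomial (Fin (M + 1)) ℚ) ^ 2) ^ (b n))).coeff
          (∑ n : Fin (M + 1), (k n + ktilde M k n)) =
        ((∏ n : Fin (M+1), c b n : ℕ) : ℚ) * (-1) ^ (∑ n : Fin (M+1), ktilde M k n) := by
      intro b hb
      have hA : (∑ n : Fin (M+1), (ktilde M k n - b n)) + (∑ n : Fin (M+1), (k n - b n))
          + 2 * (∑ n : Fin (M+1), b n) = ∑ n : Fin (M + 1), (k n + ktilde M k n) := by
        rw [Finset.mul_sum, ← Finset.sum_add_distrib, ← Finset.sum_add_distrib]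
        refine Finset.sum_congr rfl fun n _ => ?_
        obtain ⟨h1, h2, h3⟩ := hbk b hb n
        omega
      have hAS : (∑ n : Fin (M+1), (ktilde M k n - b n)) + (∑ n : Fin (M+1), b n)
          = ∑ n : Fin (M+1), ktilde M k n := by
        rw [← Finset.sum_add_distrib]
        refine Finset.sum_congr rfl fun n _ => ?_
        obtain ⟨h1, h2, h3⟩ := hbk b hb n
        omega
      rw [map_prod]
      have hf : ∀ n : Fin (M+1), φ
          ((((k n).choose (b n) *
            (ktilde M k n - min 1 (ktilde M k n)).choose
              (b n - min 1 (ktilde M k n)) : ℕ) : MvPolynomial (Fin (M + 1)) ℚ) *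
            (-(X n : MvPolynomial (Fin (M + 1)) ℚ)) ^ (ktilde M k n - b n) *
            (X n : MvPolynomial (Fin (M + 1)) ℚ) ^ (k n - b n) *
            (1 - (X n : MvPolynomial (Fin (M + 1)) ℚ) ^ 2) ^ (b n)) =
          Polynomial.C ((c b n : ℕ) : ℚ) * (-Polynomial.X) ^ (ktilde M k n - b n) *
            Polynomial.X ^ (k n - b n) * (1 - Polynomial.X ^ 2) ^ (b n) := by
        intro n
        simp [hφ, hc, Polynomial.C_eq_natCast]
      rw [Finset.prod_congr rfl fun n _ => hf n]
      rw [Finset.prod_mul_distrib, Finset.prod_mul_distrib, Finset.prod_mul_distrib,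
        Finset.prod_pow_eq_pow_sum, Finset.prod_pow_eq_pow_sum, Finset.prod_pow_eq_pow_sum]
      have hCprod : (∏ x : Fin (M+1), Polynomial.C ((c b x : ℕ) : ℚ)) =
          Polynomial.C ((∏ x : Fin (M+1), c b x : ℕ) : ℚ) := by
        rw [Nat.cast_prod]
        exact (map_prod (Polynomial.C : ℚ →+* Polynomial ℚ) _ _).symm
      rw [hCprod, ← hA, aux_coeff, hAS]
    rw [Finset.sum_congr rfl hterm, ← Finset.sum_mul, ← Nat.cast_sum]
    have hsum : (∑ b ∈ Finset.Icc (fun n => min 1 (ktilde M k n))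
        (fun n => min (k n) (ktilde M k n)), ∏ n : Fin (M+1), c b n) ≠ 0 := by
      have humem : (fun n => min 1 (ktilde M k n)) ∈ Finset.Icc
          (fun n => min 1 (ktilde M k n)) (fun n => min (k n) (ktilde M k n)) := by
        rw [Finset.mem_Icc]
        refine ⟨le_refl _, Pi.le_def.mpr fun n => ?_⟩
        have hkn := hk1 n
        rcases Nat.eq_zero_or_pos (ktilde M k n) with h0 | h0
        · simp [h0]
        · have hk : 1 ≤ k n := by
            rcases Nat.eq_zero_or_pos (k n) with h1 | h1
            · omega
            · omega
          exact le_min (le_trans (min_le_left _ _) hk) (min_le_right _ _)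
      intro h0
      rw [Finset.sum_eq_zero_iff] at h0
      have := h0 _ humem
      rw [Finset.prod_eq_zero_iff] at this
      obtain ⟨n, _, hn⟩ := this
      rw [hc] at hn
      simp only [Nat.sub_self, Nat.choose_zero_right, mul_one] at hn
      have hkn := hk1 n
      have hle : min 1 (ktilde M k n) ≤ k n := by
        rcases Nat.eq_zero_or_pos (ktilde M k n) with h0' | h0'
        · simp [h0']
        · have : k n ≠ 0 := fun h => by omega
          omega
      exact absurd hn (Nat.choose_pos hle).ne'
    exact mul_ne_zero (Nat.cast_ne_zero.mpr hsum) (pow_ne_zero _ (by norm_num))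
end
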